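/- Let A be an n×n complex matrix and R > 0 such that every eigenvalue λ of A satisfies |λ| < R. Then for every w ∈ ℂ, (1/(2πi)) ∮_{|σ|=R} exp(w·σ) · (σ·I − A)⁻¹ dσ = exp(w • A), where the integral is the counterclockwise circle integral over the circle of radius R centered at 0. In particular, taking w = log ρ with ρ > 0 gives (1/(2πi)) ∮_{|σ|=R} ρ^σ (σ·I − A)⁻¹ dσ = ρ^A. -/

import Mathlib

/- STATEMENT 1: If every eigenvalue of A has modulus < R, then for every w ∈ ℂ,
(1/(2πi)) ∮_{|σ|=R} e^{wσ} (σI − A)⁻¹ dσ = exp (w • A); in particular, for ρ > 0,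
(1/(2πi)) ∮_{|σ|=R} ρ^σ (σI − A)⁻¹ dσ = ρ^A := exp ((log ρ) • A). -/

attribute [local instance] Matrix.frobeniusNormedAddCommGroup Matrix.frobeniusNormedSpace

attribute [local instance] Matrix.frobeniusNormedRing Matrix.frobeniusNormedAlgebra

open scoped Real NNReal ENNReal
open Complex Metric MeasureTheory Filter Topology

lemma circleIntegral_tsum_comm {E : Type*} [NormedAddCommGroup E] [NormedSpace ℂ E]
    [CompleteSpace E] (f : ℕ → ℂ → E) {R : ℝ} (hR : 0 < R)
    (hc : ∀ k, ContinuousOn (f k) (sphere (0 : ℂ) R))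
    (C : ℕ → ℝ) (hC : Summable C)
    (hb : ∀ k, ∀ σ ∈ sphere (0 : ℂ) R, ‖f k σ‖ ≤ C k) :
    (∮ σ in C(0, R), ∑' k, f k σ) = ∑' k, ∮ σ in C(0, R), f k σ := by
  have hle : (0 : ℝ) ≤ 2 * π := by positivity
  set F : ℕ → ℝ → E := fun k θ => deriv (circleMap 0 R) θ • f k (circleMap 0 R θ) with hF
  have hcontF : ∀ k, Continuous (F k) := by
    intro k
    have h1 : Continuous fun θ : ℝ => f k (circleMap 0 R θ) :=
      (hc k).comp_continuous (continuous_circleMap 0 R) fun θ => circleMap_mem_sphere 0 hR.le θ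
    have h2 : Continuous fun θ : ℝ => deriv (circleMap 0 R) θ := by
      simp only [deriv_circleMap]
      exact (continuous_circleMap 0 R).mul continuous_const
    exact h2.smul h1
  have hbd : ∀ k θ, ‖F k θ‖ ≤ R * C k := by
    intro k θ
    rw [hF]
    simp only
    rw [norm_smul, deriv_circleMap]
    have h3 : ‖circleMap 0 R θ * Complex.I‖ = R := by
      simp [norm_circleMap_zero, _root_.abs_of_pos hR]
    rw [h3]
    exact mul_le_mul_of_nonneg_left (hb k _ (circleMap_mem_sphere 0 hR.le θ)) hR.le
  have hsum : ∀ θ : ℝ, Summable fun k => f k (circleMap 0 R θ) := fun θ =>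
    Summable.of_norm_bounded hC fun k => hb k _ (circleMap_mem_sphere 0 hR.le θ)
  have key : ∀ θ : ℝ, (deriv (circleMap 0 R) θ • ∑' k, f k (circleMap 0 R θ))
      = ∑' k, F k θ := fun θ => (Summable.tsum_const_smul _ (hsum θ)).symm
  have hint : ∀ k, Integrable (F k) (volume.restrict (Set.Ioc (0:ℝ) (2*π))) :=
    fun k => (hcontF k).integrableOn_Ioc
  have hintnorm : ∀ k, ∫ θ in Set.Ioc (0:ℝ) (2*π), ‖F k θ‖ ≤ (2*π) * (R * C k) := by
    intro k
    calc ∫ θ in Set.Ioc (0:ℝ) (2*π), ‖F k θ‖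
        ≤ ∫ _θ in Set.Ioc (0:ℝ) (2*π), (R * C k) := by
          refine integral_mono_of_nonneg (Filter.Eventually.of_forall fun θ => norm_nonneg _)
            ?_ (Filter.Eventually.of_forall fun θ => hbd k θ)
          refine integrableOn_const ?_
          rw [Real.volume_Ioc]
          exact ENNReal.ofReal_ne_top
      _ = (2*π) * (R * C k) := by
          rw [setIntegral_const, measureReal_def, Real.volume_Ioc, smul_eq_mul, sub_zero,
            ENNReal.toReal_ofReal hle]
  have hCnonneg : ∀ k, 0 ≤ C k := by
    intro k
    have := hb k (R : ℂ) (by simp [Complex.dist_eq, _root_.abs_of_pos hR])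
    exact le_trans (norm_nonneg _) this
  have hsumint : Summable fun k => ∫ θ in Set.Ioc (0:ℝ) (2*π), ‖F k θ‖ := by
    refine Summable.of_nonneg_of_le (fun k => integral_nonneg fun θ => norm_nonneg _)
      (fun k => hintnorm k) ?_
    exact (hC.mul_left R).mul_left (2*π)
  have swap := MeasureTheory.integral_tsum_of_summable_integral_norm hint hsumint
  unfold circleIntegral
  simp only [key]
  rw [intervalIntegral.integral_of_le hle]
  rw [tsum_congr (fun k => intervalIntegral.integral_of_le hle (f := fun θ => F k θ))]
  exact swap.symm

lemma circleIntegral_exp_coeff {R : ℝ} (hR : 0 < R) (w : ℂ) (k : ℕ) :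
    (∮ σ in C(0, R), (σ ^ (k + 1))⁻¹ * Complex.exp (w * σ))
      = (2 * Real.pi * Complex.I) * (w ^ k / (Nat.factorial k : ℂ)) := by
  lift R to NNReal using hR.le with R' hR'
  have hR0 : 0 < R' := by exact_mod_cast hR
  set f : ℂ → ℂ := fun z => Complex.exp (w * z) with hf
  have hd : DifferentiableOn ℂ f (closedBall (0:ℂ) R') :=
    ((differentiable_id.const_mul w).cexp).differentiableOn
  have h1 : HasFPowerSeriesOnBall f (cauchyPowerSeries f 0 R') 0 R' :=
    hd.hasFPowerSeriesOnBall hR0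
  set q : FormalMultilinearSeries ℂ ℂ ℂ :=
    fun m => ContinuousMultilinearMap.mkPiRing ℂ (Fin m) (w ^ m / (Nat.factorial m : ℂ)) with hq
  have hq_apply : ∀ m (y : ℂ), (q m fun _ => y) = (w * y) ^ m / (Nat.factorial m : ℂ) := by
    intro m y
    simp only [hq, ContinuousMultilinearMap.mkPiRing_apply, Finset.prod_const, Finset.card_univ,
      Fintype.card_fin, smul_eq_mul, mul_pow]
    ring
  have h2 : HasFPowerSeriesOnBall f q 0 R' := by
    refine ⟨?_, by exact_mod_cast hR0, ?_⟩
    · refine FormalMultilinearSeries.le_radius_of_summable q ?_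
      have hsum : Summable fun m : ℕ => (‖w‖ * R') ^ m / (Nat.factorial m) :=
        Real.summable_pow_div_factorial _
      refine hsum.congr fun m => ?_
      simp only [hq, ContinuousMultilinearMap.norm_mkPiRing]
      rw [norm_div, norm_pow]
      simp only [Complex.norm_natCast, mul_pow]
      rw [div_mul_eq_mul_div]
    · intro y hy
      have hs := NormedSpace.expSeries_div_hasSum_exp (w * y)
      rw [← Complex.exp_eq_exp_ℂ] at hs
      simp only [hq_apply, hf, zero_add]
      exact hs
  have heq : q = cauchyPowerSeries f 0 R' :=
    h2.hasFPowerSeriesAt.eq_formalMultilinearSeries h1.hasFPowerSeriesAt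
  have happ : (q k fun _ => (1:ℂ)) = cauchyPowerSeries f 0 R' k fun _ => (1:ℂ) := by rw [heq]
  rw [hq_apply, cauchyPowerSeries_apply, mul_one] at happ
  have hcongr : (∮ z in C(0, (R':ℝ)), ((1:ℂ) / (z - 0)) ^ k • ((z - 0)⁻¹ • f z))
      = ∮ σ in C(0, (R':ℝ)), (σ ^ (k + 1))⁻¹ * Complex.exp (w * σ) := by
    refine circleIntegral.integral_congr hR.le fun z hz => ?_
    have habs : ‖z‖ = R' := by simpa [Complex.dist_eq] using hz
    have hz0 : z ≠ 0 := by
      intro h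
      rw [h] at habs
      simp at habs
      exact hR.ne' (by exact_mod_cast habs.symm)
    simp only [sub_zero, smul_eq_mul, one_div, hf]
    rw [← mul_assoc, inv_pow, ← mul_inv, ← pow_succ]
  rw [hcongr, smul_eq_mul] at happ
  rw [happ, ← mul_assoc, mul_inv_cancel₀ Complex.two_pi_I_ne_zero, one_mul]

lemma hasSum_resolvent {n : ℕ} (A : Matrix (Fin n) (Fin n) ℂ) {c r : ℝ}
    (hb : ∀ k, ‖A ^ k‖ ≤ c * r ^ k) (hr : 0 ≤ r) {σ : ℂ} (hσ : r < ‖σ‖) :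
    HasSum (fun k : ℕ => ((σ ^ (k + 1))⁻¹) • A ^ k)
      (σ • (1 : Matrix (Fin n) (Fin n) ℂ) - A)⁻¹ := by
  have hσ0' : 0 < ‖σ‖ := lt_of_le_of_lt hr hσ
  have hσ0 : σ ≠ 0 := by
    intro h; rw [h] at hσ0'; simp at hσ0'
  have hratio : r / ‖σ‖ < 1 := (div_lt_one hσ0').mpr hσ
  have hratio0 : 0 ≤ r / ‖σ‖ := by positivity
  have hnorm : ∀ k : ℕ, ‖((σ ^ (k + 1))⁻¹ : ℂ) • A ^ k‖
      ≤ (c / ‖σ‖) * (r / ‖σ‖) ^ k := by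
    intro k
    rw [norm_smul, norm_inv, norm_pow]
    have h1 : ((‖σ‖) ^ (k+1))⁻¹ * ‖A ^ k‖ ≤ ((‖σ‖) ^ (k+1))⁻¹ * (c * r ^ k) :=
      mul_le_mul_of_nonneg_left (hb k) (by positivity)
    refine h1.trans_eq ?_
    rw [inv_mul_eq_div, div_pow, div_mul_div_comm, ← pow_succ']
  have hsummable : Summable fun k : ℕ => ((σ ^ (k + 1))⁻¹ : ℂ) • A ^ k :=
    Summable.of_norm_bounded ((summable_geometric_of_lt_one hratio0 hratio).mul_left _) hnorm
  have hS := hsummable.hasSum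
  set S := ∑' k : ℕ, ((σ ^ (k + 1))⁻¹ : ℂ) • A ^ k with hSdef
  set u : ℕ → Matrix (Fin n) (Fin n) ℂ := fun k => ((σ ^ k)⁻¹ : ℂ) • A ^ k with hu
  have hterm : ∀ k : ℕ, (σ • (1 : Matrix (Fin n) (Fin n) ℂ) - A) * (((σ ^ (k + 1))⁻¹ : ℂ) • A ^ k)
      = u k - u (k + 1) := by
    intro k
    rw [sub_mul, smul_mul_assoc, one_mul, Matrix.mul_smul, smul_smul]
    congr 1
    · rw [hu]
      congr 1
      rw [pow_succ', mul_inv, ← mul_assoc, mul_inv_cancel₀ hσ0, one_mul]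
    · rw [hu, ← pow_succ']
  have hmul : HasSum (fun k : ℕ => (σ • (1 : Matrix (Fin n) (Fin n) ℂ) - A)
      * (((σ ^ (k + 1))⁻¹ : ℂ) • A ^ k)) ((σ • (1 : Matrix (Fin n) (Fin n) ℂ) - A) * S) :=
    hS.mul_left _
  have hps := hmul.tendsto_sum_nat
  have hps2 : Tendsto (fun K : ℕ => (1 : Matrix (Fin n) (Fin n) ℂ) - u K) atTop
      (𝓝 ((σ • (1 : Matrix (Fin n) (Fin n) ℂ) - A) * S)) := by
    refine hps.congr fun K => ?_
    rw [Finset.sum_congr rfl fun k _ => hterm k, Finset.sum_range_sub' u]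
    congr 1
    rw [hu]; simp
  have hunorm : ∀ K : ℕ, ‖u K‖ ≤ c * (r / ‖σ‖) ^ K := by
    intro K
    rw [hu]
    simp only
    rw [norm_smul, norm_inv, norm_pow]
    have h1 : ((‖σ‖) ^ K)⁻¹ * ‖A ^ K‖ ≤ ((‖σ‖) ^ K)⁻¹ * (c * r ^ K) :=
      mul_le_mul_of_nonneg_left (hb K) (by positivity)
    refine h1.trans_eq ?_
    rw [inv_mul_eq_div, div_pow, mul_div_assoc]
  have hulim : Tendsto u atTop (𝓝 0) :=
    squeeze_zero_norm hunorm (by simpa using (tendsto_pow_atTop_nhds_zero_of_lt_one hratio0 hratio).const_mul c)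
  have h1lim : Tendsto (fun K => (1 : Matrix (Fin n) (Fin n) ℂ) - u K) atTop (𝓝 (1 - 0)) :=
    tendsto_const_nhds.sub hulim
  have hone : (σ • (1 : Matrix (Fin n) (Fin n) ℂ) - A) * S = 1 := by
    have h2 := tendsto_nhds_unique hps2 h1lim
    rw [h2, sub_zero]
  rw [Matrix.inv_eq_right_inv hone]
  exact hS

lemma exists_pow_norm_bound {n : ℕ} (hn : 0 < n) (A : Matrix (Fin n) (Fin n) ℂ) {R : ℝ}
    (hR : 0 < R) (hspec : ∀ l ∈ spectrum ℂ A, ‖l‖ < R) :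
    ∃ c r : ℝ, 0 ≤ c ∧ 0 ≤ r ∧ r < R ∧ ∀ k, ‖A ^ k‖ ≤ c * r ^ k := by
  haveI : Nontrivial (Matrix (Fin n) (Fin n) ℂ) := by
    refine ⟨⟨1, 0, fun h => ?_⟩⟩
    have h2 := congrFun (congrFun h ⟨0, hn⟩) ⟨0, hn⟩
    simp [Matrix.one_apply] at h2
  have hlt : spectralRadius ℂ A < (R.toNNReal : ℝ≥0∞) := by
    refine spectrum.spectralRadius_lt_of_forall_lt (a := A) ?_
    intro z hz
    have h5 := hspec z hz
    have h4 : (‖z‖₊ : ℝ) < (R.toNNReal : ℝ) := by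
      rw [Real.coe_toNNReal R hR.le]
      simpa using h5
    exact_mod_cast h4
  obtain ⟨r, hr1, hr2⟩ := ENNReal.lt_iff_exists_nnreal_btwn.mp hlt
  have hrR : (r : ℝ) < R := by
    rw [ENNReal.coe_lt_coe] at hr2
    calc (r : ℝ) < (R.toNNReal : ℝ) := by exact_mod_cast hr2
      _ = R := Real.coe_toNNReal R hR.le
  have hr0 : (0 : ℝ≥0∞) < r := lt_of_le_of_lt (by simp) hr1
  have hr0' : 0 < (r : ℝ) := by exact_mod_cast hr0
  have gel := spectrum.pow_nnnorm_pow_one_div_tendsto_nhds_spectralRadius A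
  have hev : ∀ᶠ k : ℕ in atTop, (‖A ^ k‖₊ : ℝ≥0∞) ^ (1 / (k : ℝ)) < (r : ℝ≥0∞) :=
    gel.eventually_lt_const hr1
  obtain ⟨N, hN⟩ := eventually_atTop.mp hev
  set M := max N 1 with hM
  have hbig : ∀ k, M ≤ k → ‖A ^ k‖ ≤ (r : ℝ) ^ k := by
    intro k hk
    have hk1 : 1 ≤ k := le_trans (le_max_right N 1) hk
    have hkN : N ≤ k := le_trans (le_max_left N 1) hk
    have hkne : (k : ℝ) ≠ 0 := by positivity
    have h1 := hN k hkN
    have h2 : (‖A ^ k‖₊ : ℝ≥0∞) ≤ (r : ℝ≥0∞) ^ (k : ℕ) := by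
      have h3 : ((‖A ^ k‖₊ : ℝ≥0∞) ^ (1 / (k : ℝ))) ^ (k : ℝ)
          ≤ ((r : ℝ≥0∞)) ^ (k : ℝ) := ENNReal.rpow_le_rpow h1.le (by positivity)
      have h4 : (‖A ^ k‖₊ : ℝ≥0∞) = ((‖A ^ k‖₊ : ℝ≥0∞) ^ (1 / (k : ℝ))) ^ (k : ℝ) := by
        rw [← ENNReal.rpow_mul, one_div, inv_mul_cancel₀ hkne, ENNReal.rpow_one]
      calc (‖A ^ k‖₊ : ℝ≥0∞) = ((‖A ^ k‖₊ : ℝ≥0∞) ^ (1 / (k : ℝ))) ^ (k : ℝ) := h4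
        _ ≤ (r : ℝ≥0∞) ^ (k : ℝ) := h3
        _ = (r : ℝ≥0∞) ^ (k : ℕ) := by rw [← ENNReal.rpow_natCast]
    rw [← ENNReal.coe_pow, ENNReal.coe_le_coe] at h2
    calc ‖A ^ k‖ = ((‖A ^ k‖₊ : ℝ≥0) : ℝ) := rfl
      _ ≤ ((r ^ k : ℝ≥0) : ℝ) := by exact_mod_cast h2
      _ = (r : ℝ) ^ k := by push_cast; ring
  set S : ℝ := ∑ j ∈ Finset.range M, ‖A ^ j‖ / (r : ℝ) ^ j with hSdef
  have hS0 : 0 ≤ S := Finset.sum_nonneg fun j _ => by positivity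
  refine ⟨1 + S, r, by linarith, hr0'.le, hrR, fun k => ?_⟩
  by_cases hk : M ≤ k
  · have h1 := hbig k hk
    have h2 : (1 : ℝ) * (r : ℝ) ^ k ≤ (1 + S) * (r : ℝ) ^ k :=
      mul_le_mul_of_nonneg_right (by linarith) (by positivity)
    linarith
  · push_neg at hk
    have h1 : ‖A ^ k‖ / (r : ℝ) ^ k ≤ S :=
      Finset.single_le_sum (f := fun j => ‖A ^ j‖ / (r : ℝ) ^ j)
        (fun j _ => by positivity) (Finset.mem_range.mpr hk)
    have h2 : ‖A ^ k‖ / (r : ℝ) ^ k ≤ 1 + S := by linarith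
    calc ‖A ^ k‖ = (‖A ^ k‖ / (r : ℝ) ^ k) * (r : ℝ) ^ k := by field_simp
      _ ≤ (1 + S) * (r : ℝ) ^ k := mul_le_mul_of_nonneg_right h2 (by positivity)

theorem circleIntegral_resolvent_exp {n : ℕ}
    (A : Matrix (Fin n) (Fin n) ℂ) (R : ℝ) (hR : 0 < R)
    (hspec : ∀ l ∈ spectrum ℂ A, ‖l‖ < R) :
    (∀ w : ℂ,
      (2 * Real.pi * Complex.I)⁻¹ •
          (∮ σ in C(0, R),
            Complex.exp (w * σ) • (σ • (1 : Matrix (Fin n) (Fin n) ℂ) - A)⁻¹)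
        = NormedSpace.exp (w • A)) ∧
    (∀ ρ : ℝ, 0 < ρ →
      (2 * Real.pi * Complex.I)⁻¹ •
          (∮ σ in C(0, R),
            ((ρ : ℂ) ^ σ) • (σ • (1 : Matrix (Fin n) (Fin n) ℂ) - A)⁻¹)
        = NormedSpace.exp ((Real.log ρ : ℂ) • A)) := by
  rcases Nat.eq_zero_or_pos n with hn | hn
  · subst hn
    haveI : Subsingleton (Matrix (Fin 0) (Fin 0) ℂ) := ⟨fun M N => by ext i; exact i.elim0⟩
    exact ⟨fun _ => Subsingleton.elim _ _, fun _ _ => Subsingleton.elim _ _⟩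
  obtain ⟨c, r, hc0, hr0, hrR, hb⟩ := exists_pow_norm_bound hn A hR hspec
  have habs : ∀ σ ∈ sphere (0 : ℂ) R, ‖σ‖ = R := fun σ hσ => by
    simpa [Complex.dist_eq] using hσ
  have main : ∀ w : ℂ,
      (2 * Real.pi * Complex.I)⁻¹ •
          (∮ σ in C(0, R),
            Complex.exp (w * σ) • (σ • (1 : Matrix (Fin n) (Fin n) ℂ) - A)⁻¹)
        = NormedSpace.exp (w • A) := by
    intro w
    set g : ℕ → ℂ → Matrix (Fin n) (Fin n) ℂ :=
      fun k σ => ((σ ^ (k + 1))⁻¹ * Complex.exp (w * σ)) • A ^ k with hg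
    have step1 : (∮ σ in C(0, R),
        Complex.exp (w * σ) • (σ • (1 : Matrix (Fin n) (Fin n) ℂ) - A)⁻¹)
        = ∮ σ in C(0, R), ∑' k, g k σ := by
      refine circleIntegral.integral_congr hR.le fun σ hσ => ?_
      have hs := hasSum_resolvent A hb hr0 (σ := σ) (by rw [habs σ hσ]; exact hrR)
      rw [← hs.tsum_eq, ← Summable.tsum_const_smul _ hs.summable]
      exact tsum_congr fun k => by rw [hg]; simp only; rw [smul_smul, mul_comm]
    set C : ℕ → ℝ := fun k => (Real.exp (‖w‖ * R) * c / R) * (r / R) ^ k with hC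
    have hCsum : Summable C := by
      refine Summable.mul_left _ (summable_geometric_of_lt_one (by positivity) ?_)
      rw [div_lt_one hR]; exact hrR
    have hbound : ∀ k, ∀ σ ∈ sphere (0 : ℂ) R, ‖g k σ‖ ≤ C k := by
      intro k σ hσ
      have hab := habs σ hσ
      rw [hg]
      simp only
      rw [norm_smul, norm_mul, norm_inv, norm_pow, hab]
      have hexp : ‖Complex.exp (w * σ)‖ ≤ Real.exp (‖w‖ * R) := by
        rw [Complex.norm_exp]
        refine Real.exp_le_exp.mpr ?_
        calc (w * σ).re ≤ ‖w * σ‖ := Complex.re_le_norm _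
          _ = ‖w‖ * R := by rw [norm_mul, hab]
      have h1 : (R ^ (k+1))⁻¹ * ‖Complex.exp (w * σ)‖ * ‖A ^ k‖
          ≤ (R ^ (k+1))⁻¹ * Real.exp (‖w‖ * R) * (c * r ^ k) := by
        refine mul_le_mul ?_ (hb k) (norm_nonneg _) (by positivity)
        exact mul_le_mul_of_nonneg_left hexp (by positivity)
      refine h1.trans_eq ?_
      rw [hC]
      simp only
      rw [div_pow, pow_succ]
      field_simp
    have hcont : ∀ k, ContinuousOn (g k) (sphere (0 : ℂ) R) := by
      intro k
      refine ContinuousOn.fun_smul ?_ continuousOn_const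
      refine ContinuousOn.mul (ContinuousOn.inv₀ (continuous_pow (k+1)).continuousOn ?_) ?_
      · intro σ hσ
        have := habs σ hσ
        refine pow_ne_zero _ fun h => ?_
        rw [h] at this; simp at this; exact hR.ne' this.symm
      · exact (Complex.continuous_exp.comp (continuous_const.mul continuous_id)).continuousOn
    have step2 : (∮ σ in C(0, R), ∑' k, g k σ) = ∑' k, ∮ σ in C(0, R), g k σ :=
      circleIntegral_tsum_comm g hR hcont C hCsum hbound
    have step3 : ∀ k, (∮ σ in C(0, R), g k σ)
        = (2 * Real.pi * Complex.I) • (((Nat.factorial k : ℂ))⁻¹ • (w • A) ^ k) := by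
      intro k
      rw [hg]
      simp only
      rw [circleIntegral.integral_smul_const, circleIntegral_exp_coeff hR w k,
        smul_pow, smul_smul, smul_smul]
      congr 1
      ring
    rw [step1, step2, tsum_congr step3,
      Summable.tsum_const_smul _ (show Summable fun k : ℕ => ((Nat.factorial k : ℂ))⁻¹ • (w • A) ^ k from NormedSpace.expSeries_summable' (𝕂 := ℂ) (w • A)),
      smul_smul, inv_mul_cancel₀ Complex.two_pi_I_ne_zero, one_smul,
      NormedSpace.exp_eq_tsum ℂ]
  refine ⟨main, fun ρ hρ => ?_⟩
  have hρ0 : (ρ : ℂ) ≠ 0 := by exact_mod_cast hρ.ne'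
  have hcpow : ∀ σ : ℂ, ((ρ : ℂ) ^ σ) = Complex.exp ((Real.log ρ : ℂ) * σ) := fun σ => by
    rw [Complex.cpow_def_of_ne_zero hρ0, Complex.ofReal_log hρ.le]
  simp only [hcpow]
  exact main _
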